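/- arXiv:1605.00954 — 3 statements merged into one kernel-verified Lean document; each statement's English description precedes it below -/
import Mathlib

section
/- Let n ≥ 2 and let L be a k-dimensional linear subspace of ℝⁿ with 2 ≤ k ≤ n−1. If a homogeneous polynomial p of degree r on ℝⁿ satisfies p(ϑ⁻¹ y) = p(y) for every rotation ϑ ∈ SO(n) that fixes the orthogonal complement L^⊥ pointwise, then p can be written as p(y) = Σ_{j=0}^{⌊r/2⌋} ‖π_L y‖^{2j} q_j(π_{L^⊥} y), where π_L and π_{L^⊥} denote the orthogonal projections onto L and L^⊥, and each q_j is a homogeneous polynomial of degree r−2j on L^⊥. -/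
open scoped RealInnerProductSpace
open Finset

/-- The orthogonal projection onto a subspace, as a map into the ambient space. -/
noncomputable def projVec {n : ℕ} (L : Submodule ℝ (EuclideanSpace ℝ (Fin n)))
    (y : EuclideanSpace ℝ (Fin n)) : EuclideanSpace ℝ (Fin n) :=
  (L.orthogonalProjection y : EuclideanSpace ℝ (Fin n))

/-- A rotation of ℝⁿ: a linear isometry with positive determinant. -/
def IsRotation {n : ℕ} (ϑ : EuclideanSpace ℝ (Fin n) ≃ₗᵢ[ℝ] EuclideanSpace ℝ (Fin n)) : Prop :=
  0 < LinearMap.det (ϑ.toLinearEquiv : EuclideanSpace ℝ (Fin n) →ₗ[ℝ] EuclideanSpace ℝ (Fin n))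

lemma exists_rot {n : ℕ} (L : Submodule ℝ (EuclideanSpace ℝ (Fin n)))
    (hL : 2 ≤ Module.finrank ℝ L) {u v : EuclideanSpace ℝ (Fin n)}
    (hu : u ∈ L) (hv : v ∈ L) (huv : ‖u‖ = ‖v‖) :
    ∃ ϑ : EuclideanSpace ℝ (Fin n) ≃ₗᵢ[ℝ] EuclideanSpace ℝ (Fin n),
      IsRotation ϑ ∧ (∀ w ∈ Lᗮ, ϑ w = w) ∧ ϑ u = v := by
  rcases eq_or_ne u v with rfl | huv'
  · refine ⟨LinearIsometryEquiv.refl ℝ _, ?_, fun w _ => rfl, rfl⟩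
    have : ((LinearIsometryEquiv.refl ℝ (EuclideanSpace ℝ (Fin n))).toLinearEquiv :
        EuclideanSpace ℝ (Fin n) →ₗ[ℝ] EuclideanSpace ℝ (Fin n)) = LinearMap.id := rfl
    rw [IsRotation, this, LinearMap.det_id]
    norm_num
  -- find z ∈ L, z ≠ 0, ⟪v, z⟫ = 0
  obtain ⟨z, hzL, hz0, hvz⟩ : ∃ z : EuclideanSpace ℝ (Fin n), z ∈ L ∧ z ≠ 0 ∧ ⟪v, z⟫ = 0 := by
    let f : L →ₗ[ℝ] ℝ := (innerSL ℝ v).toLinearMap.comp L.subtype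
    have hker : LinearMap.ker f ≠ ⊥ := by
      intro hbot
      have h1 : Module.finrank ℝ (LinearMap.range f) + Module.finrank ℝ (LinearMap.ker f) =
          Module.finrank ℝ L := LinearMap.finrank_range_add_finrank_ker f
      have h2 : Module.finrank ℝ (LinearMap.range f) ≤ Module.finrank ℝ ℝ :=
        (LinearMap.range f).finrank_le
      rw [hbot, finrank_bot] at h1
      simp [Module.finrank_self] at h1 h2
      omega
    obtain ⟨z', hz', hz'0⟩ := Submodule.exists_mem_ne_zero_of_ne_bot hker
    refine ⟨(z' : EuclideanSpace ℝ (Fin n)), z'.2, ?_, ?_⟩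
    · simpa using hz'0
    · simpa [f] using hz'
  have hsub : u - v ≠ 0 := sub_ne_zero.mpr huv'
  let R1 := Submodule.reflection (ℝ ∙ (u - v))ᗮ
  let R2 := Submodule.reflection (ℝ ∙ z)ᗮ
  refine ⟨R1.trans R2, ?_, ?_, ?_⟩
  · have hdet : ∀ a : EuclideanSpace ℝ (Fin n), a ≠ 0 →
        LinearMap.det (Submodule.reflection (ℝ ∙ a)ᗮ).toLinearMap = -1 := by
      intro a ha
      rw [Submodule.det_reflection, Submodule.orthogonal_orthogonal, finrank_span_singleton ha, pow_one]
    have : ((R1.trans R2).toLinearEquiv :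
        EuclideanSpace ℝ (Fin n) →ₗ[ℝ] EuclideanSpace ℝ (Fin n)) =
        (R2.toLinearMap).comp (R1.toLinearMap) := rfl
    rw [IsRotation, this, LinearMap.det_comp, hdet _ hsub, hdet _ hz0]
    norm_num
  · intro w hw
    have h1 : R1 w = w := Submodule.reflection_mem_subspace_eq_self
      ((Submodule.mem_orthogonal_singleton_iff_inner_right).mpr
        (hw _ (Submodule.sub_mem L hu hv)))
    have h2 : R2 w = w := Submodule.reflection_mem_subspace_eq_self
      ((Submodule.mem_orthogonal_singleton_iff_inner_right).mpr (hw _ hzL))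
    simp [LinearIsometryEquiv.trans_apply, h1, h2]
  · have h1 : R1 u = v := Submodule.reflection_sub huv
    have h2 : R2 v = v := Submodule.reflection_mem_subspace_eq_self
      ((Submodule.mem_orthogonal_singleton_iff_inner_right).mpr
        (inner_eq_zero_symm.mp hvz))
    simp [LinearIsometryEquiv.trans_apply, h1, h2]

open Finset

lemma coeff_comp_neg_X {R : Type*} [CommRing R] (p : Polynomial R) (m : ℕ) :
    (p.comp (-Polynomial.X)).coeff m = (-1) ^ m * p.coeff m := by
  induction p using Polynomial.induction_on' with
  | add p q hp hq => simp [Polynomial.add_comp, hp, hq, mul_add]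
  | monomial k a =>
    have h1 : (-1 : Polynomial R) = Polynomial.C (-1) := by simp
    rw [Polynomial.monomial_comp, neg_pow, h1, ← Polynomial.C_pow, ← mul_assoc,
      ← Polynomial.C_mul, Polynomial.coeff_C_mul, Polynomial.coeff_X_pow,
      Polynomial.coeff_monomial]
    rcases eq_or_ne k m with rfl | hkm
    · simp [mul_comm]
    · simp [hkm, Ne.symm hkm]

lemma odd_coeff_eq_zero (p : Polynomial ℝ) (h : ∀ t : ℝ, p.eval (-t) = p.eval t)
    {m : ℕ} (hm : Odd m) : p.coeff m = 0 := by
  have hpq : p.comp (-Polynomial.X) = p := by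
    apply Polynomial.funext
    intro t
    simp [Polynomial.eval_comp, h t]
  have := coeff_comp_neg_X p m
  rw [hpq, hm.neg_one_pow] at this
  linarith

open Finset

noncomputable def Phi {n : ℕ} (e : Fin n → ℝ) :
    MvPolynomial (Fin n) ℝ →+* Polynomial (MvPolynomial (Fin n) ℝ) :=
  MvPolynomial.eval₂Hom (Polynomial.C.comp MvPolynomial.C)
    (fun i => Polynomial.C (MvPolynomial.X i) +
      Polynomial.C (MvPolynomial.C (e i)) * Polynomial.X)

lemma Phi_eval {n : ℕ} (e : Fin n → ℝ) (p : MvPolynomial (Fin n) ℝ) (w : Fin n → ℝ) (t : ℝ) :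
    Polynomial.eval t (Polynomial.map (MvPolynomial.eval w) (Phi e p)) =
      MvPolynomial.eval (fun i => w i + e i * t) p := by
  have key : (Polynomial.evalRingHom t).comp
      ((Polynomial.mapRingHom (MvPolynomial.eval w)).comp (Phi e)) =
      (MvPolynomial.eval (fun i => w i + e i * t) :
        MvPolynomial (Fin n) ℝ →+* ℝ) := by
    apply MvPolynomial.ringHom_ext
    · intro r; simp [Phi]
    · intro i; simp [Phi]
  exact RingHom.congr_fun key p

/-- bihomogeneity: coefficient of `T^m` is homogeneous of degree `d - m`, and zero for `m > d`. -/
def BH {n : ℕ} (d : ℕ) (P : Polynomial (MvPolynomial (Fin n) ℝ)) : Prop :=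
  (∀ m, (P.coeff m).IsHomogeneous (d - m)) ∧ ∀ m, d < m → P.coeff m = 0

lemma BH.mul {n d₁ d₂ : ℕ} {P Q : Polynomial (MvPolynomial (Fin n) ℝ)}
    (hP : BH d₁ P) (hQ : BH d₂ Q) : BH (d₁ + d₂) (P * Q) := by
  constructor
  · intro m
    rw [Polynomial.coeff_mul]
    apply MvPolynomial.IsHomogeneous.sum
    rintro ⟨x1, x2⟩ hx
    have hxm : x1 + x2 = m := Finset.HasAntidiagonal.mem_antidiagonal.mp hx
    by_cases h1 : x1 ≤ d₁
    · by_cases h2 : x2 ≤ d₂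
      · have harr : (d₁ - x1) + (d₂ - x2) = d₁ + d₂ - m := by omega
        simpa [harr] using (hP.1 x1).mul (hQ.1 x2)
      · rw [hQ.2 x2 (by omega)]
        simpa using MvPolynomial.isHomogeneous_zero _ _ _
    · rw [hP.2 x1 (by omega)]
      simpa using MvPolynomial.isHomogeneous_zero _ _ _
  · intro m hm
    rw [Polynomial.coeff_mul]
    apply Finset.sum_eq_zero
    rintro ⟨x1, x2⟩ hx
    have hxm : x1 + x2 = m := Finset.HasAntidiagonal.mem_antidiagonal.mp hx
    by_cases h1 : x1 ≤ d₁
    · rw [hQ.2 x2 (by omega), mul_zero]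
    · rw [hP.2 x1 (by omega), zero_mul]

lemma BH.pow {n d : ℕ} {P : Polynomial (MvPolynomial (Fin n) ℝ)}
    (hP : BH d P) (k : ℕ) : BH (k * d) (P ^ k) := by
  induction k with
  | zero =>
    constructor
    · intro m
      rcases Nat.eq_zero_or_pos m with rfl | hm
      · simpa using MvPolynomial.isHomogeneous_one _ _
      · have : m ≠ 0 := by omega
        simp [Polynomial.coeff_one, this, MvPolynomial.isHomogeneous_zero]
    · intro m hm
      simp [Polynomial.coeff_one]; omega
  | succ k ih =>
    have := ih.mul hP
    have harr : k * d + d = (k + 1) * d := by ring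
    rw [harr] at this
    rwa [pow_succ]

lemma BH_C {n : ℕ} (c : MvPolynomial (Fin n) ℝ) (hc : c.IsHomogeneous 0) :
    BH 0 (Polynomial.C c) := by
  constructor
  · intro m
    rcases Nat.eq_zero_or_pos m with rfl | hm
    · simpa using hc
    · have : m ≠ 0 := by omega
      simp [Polynomial.coeff_C, this, MvPolynomial.isHomogeneous_zero]
  · intro m hm
    have : m ≠ 0 := by omega
    simp [Polynomial.coeff_C, this]

lemma BH_base {n : ℕ} (e : Fin n → ℝ) (i : Fin n) :
    BH 1 (Polynomial.C (MvPolynomial.X i) +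
      Polynomial.C (MvPolynomial.C (e i)) * Polynomial.X) := by
  constructor
  · intro m
    match m with
    | 0 => simpa [Polynomial.coeff_C] using MvPolynomial.isHomogeneous_X _ _
    | 1 => simpa [Polynomial.coeff_C] using MvPolynomial.isHomogeneous_C _ _
    | (k+2) => simp [Polynomial.coeff_C, MvPolynomial.isHomogeneous_zero]
  · intro m hm
    match m with
    | (k+2) => simp [Polynomial.coeff_C]

lemma BH.sumF {n d : ℕ} {α : Type*} (s : Finset α)
    (f : α → Polynomial (MvPolynomial (Fin n) ℝ)) (h : ∀ a ∈ s, BH d (f a)) :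
    BH d (∑ a ∈ s, f a) := by
  constructor
  · intro m
    rw [Polynomial.finset_sum_coeff]
    exact MvPolynomial.IsHomogeneous.sum _ _ _ fun a ha => (h a ha).1 m
  · intro m hm
    rw [Polynomial.finset_sum_coeff]
    exact Finset.sum_eq_zero fun a ha => (h a ha).2 m hm

lemma BH_phi {n r : ℕ} (e : Fin n → ℝ) (p : MvPolynomial (Fin n) ℝ)
    (hp : p.IsHomogeneous r) : BH r (Phi e p) := by
  have : Phi e p = MvPolynomial.eval₂ (Polynomial.C.comp MvPolynomial.C)
      (fun i => Polynomial.C (MvPolynomial.X i) +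
        Polynomial.C (MvPolynomial.C (e i)) * Polynomial.X) p := rfl
  rw [this, MvPolynomial.eval₂_eq]
  apply BH.sumF
  intro a ha
  have hdeg : ∑ i ∈ a.support, a i = r := by
    have h0 := hp (MvPolynomial.mem_support_iff.mp ha)
    simpa [Finsupp.weight_apply, Finsupp.sum] using h0
  have h1 : BH 0 (Polynomial.C (MvPolynomial.C (MvPolynomial.coeff a p) :
      MvPolynomial (Fin n) ℝ)) :=
    BH_C _ (MvPolynomial.isHomogeneous_C _ _)
  have h2 : ∀ s : Finset (Fin n), BH (∑ i ∈ s, a i)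
      (∏ i ∈ s, (Polynomial.C (MvPolynomial.X i) +
        Polynomial.C (MvPolynomial.C (e i)) * Polynomial.X) ^ a i) := by
    intro s
    induction s using Finset.induction_on with
    | empty => simpa using (BH_C (1 : MvPolynomial (Fin n) ℝ)
        (MvPolynomial.isHomogeneous_one _ _)).pow 0
    | @insert x s' hx ih =>
      rw [Finset.sum_insert hx, Finset.prod_insert hx]
      have hb := (BH_base e x).pow (a x)
      rw [mul_one] at hb
      exact hb.mul ih
  have := h1.mul (h2 a.support)
  simpa [hdeg] using this


theorem stmt_0 (n k r : ℕ) (hn : 2 ≤ n) (hk2 : 2 ≤ k) (hkn : k ≤ n - 1)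
    (L : Submodule ℝ (EuclideanSpace ℝ (Fin n))) (hL : Module.finrank ℝ L = k)
    (p : MvPolynomial (Fin n) ℝ) (hp : p.IsHomogeneous r)
    (hinv : ∀ ϑ : EuclideanSpace ℝ (Fin n) ≃ₗᵢ[ℝ] EuclideanSpace ℝ (Fin n),
      IsRotation ϑ → (∀ w ∈ Lᗮ, ϑ w = w) →
      ∀ y : EuclideanSpace ℝ (Fin n),
        MvPolynomial.eval (fun i => (ϑ.symm y) i) p = MvPolynomial.eval (fun i => y i) p) :
    ∃ q : ℕ → MvPolynomial (Fin n) ℝ,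
      (∀ j ≤ r / 2, (q j).IsHomogeneous (r - 2 * j)) ∧
      ∀ y : EuclideanSpace ℝ (Fin n),
        MvPolynomial.eval (fun i => y i) p =
          ∑ j ∈ Finset.range (r / 2 + 1),
            ‖projVec L y‖ ^ (2 * j) *
              MvPolynomial.eval (fun i => (projVec Lᗮ y) i) (q j) := by
  have hL2 : 2 ≤ Module.finrank ℝ L := by rw [hL]; exact hk2
  -- a unit vector in L
  have hLbot : L ≠ ⊥ := by
    intro h
    rw [h, finrank_bot] at hL
    omega
  obtain ⟨x, hxL, hx0⟩ := Submodule.exists_mem_ne_zero_of_ne_bot hLbot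
  set e : EuclideanSpace ℝ (Fin n) := ‖x‖⁻¹ • x with he_def
  have heL : e ∈ L := Submodule.smul_mem L _ hxL
  have he1 : ‖e‖ = 1 := norm_smul_inv_norm hx0
  set efun : Fin n → ℝ := fun i => e i with hefun
  set F := Phi efun p with hF
  have hBH : BH r F := BH_phi efun p hp
  -- the rotation sending e to -e
  obtain ⟨ϑ₀, hrot₀, hfix₀, hϑ₀⟩ := exists_rot L hL2 heL (Submodule.neg_mem L heL)
    (show ‖e‖ = ‖-e‖ by rw [norm_neg])
  refine ⟨fun j => F.coeff (2 * j), fun j _ => hBH.1 (2 * j), ?_⟩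
  intro y
  set u : EuclideanSpace ℝ (Fin n) := projVec L y with hu_def
  set w : EuclideanSpace ℝ (Fin n) := projVec Lᗮ y with hw_def
  have huL : u ∈ L := (L.orthogonalProjection y).2
  have hwperp : w ∈ Lᗮ := (Lᗮ.orthogonalProjection y).2
  have hy : u + w = y := by exact L.starProjection_add_starProjection_orthogonal y
  set wfun : Fin n → ℝ := fun i => w i with hwfun
  set Fw : Polynomial ℝ := F.map (MvPolynomial.eval wfun) with hFw
  -- evaluation of Fw
  have hFweval : ∀ t : ℝ, Fw.eval t = MvPolynomial.eval (fun i => (t • e + w) i) p := by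
    intro t
    have hfun : (fun i => wfun i + efun i * t) = (fun i => (t • e + w) i) := by
      funext i
      simp only [hwfun, hefun, PiLp.add_apply, PiLp.smul_apply, smul_eq_mul]
      ring
    rw [hFw, hF, Phi_eval, hfun]
  -- evenness
  have heven : ∀ t : ℝ, Fw.eval (-t) = Fw.eval t := by
    intro t
    rw [hFweval, hFweval]
    have h1 := hinv ϑ₀ hrot₀ hfix₀ (t • e + w)
    have h2 : ϑ₀.symm (t • e + w) = (-t) • e + w := by
      have hker : ϑ₀.symm e = -e := by
        have h3 : ϑ₀ (-e) = e := by rw [map_neg, hϑ₀, neg_neg]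
        rw [← h3, LinearIsometryEquiv.symm_apply_apply, h3]
      have hw' : ϑ₀.symm w = w := by
        have h4 := hfix₀ w hwperp
        rw [← h4, LinearIsometryEquiv.symm_apply_apply]
        exact h4.symm
      rw [map_add, LinearIsometryEquiv.map_smul, hker, hw', smul_neg, neg_smul]
    rw [h2] at h1
    exact h1
  have hodd : ∀ m, Odd m → Fw.coeff m = 0 := fun m hm => odd_coeff_eq_zero Fw heven hm
  -- coefficients of Fw
  have hcoeff : ∀ m, Fw.coeff m = MvPolynomial.eval wfun (F.coeff m) := by
    intro m
    rw [hFw, Polynomial.coeff_map]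
  -- degree bound
  have hdeg : Fw.natDegree < r + 1 := by
    have : Fw.natDegree ≤ r := Polynomial.natDegree_le_iff_coeff_eq_zero.mpr
      (fun m hm => by rw [hcoeff, hBH.2 m hm, map_zero])
    omega
  -- step B : p(y) = p(‖u‖ • e + w)
  obtain ⟨ϑ, hrot, hfix, hϑu⟩ := exists_rot L hL2 huL
    (Submodule.smul_mem L ‖u‖ heL)
    (show ‖u‖ = ‖‖u‖ • e‖ by rw [norm_smul, he1, mul_one, norm_norm])
  have hstepB : MvPolynomial.eval (fun i => y i) p =
      MvPolynomial.eval (fun i => (‖u‖ • e + w) i) p := by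
    have h1 := hinv ϑ hrot hfix (‖u‖ • e + w)
    have h2 : ϑ.symm (‖u‖ • e + w) = y := by
      have hwfix : ϑ.symm w = w := by
        have h4 := hfix w hwperp
        rw [← h4, LinearIsometryEquiv.symm_apply_apply]
        exact h4.symm
      have huu : ϑ.symm (‖u‖ • e) = u := by
        rw [← hϑu, LinearIsometryEquiv.symm_apply_apply]
      rw [map_add, huu, hwfix, hy]
    rw [h2] at h1
    exact h1
  rw [hstepB, ← hFweval ‖u‖]
  -- expand the polynomial evaluation
  rw [Polynomial.eval_eq_sum_range' hdeg]
  -- reindex over even indices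
  have hsub : (Finset.range (r / 2 + 1)).image (fun j => 2 * j) ⊆ Finset.range (r + 1) := by
    intro m hm
    simp only [Finset.mem_image, Finset.mem_range] at hm ⊢
    obtain ⟨j, hj, rfl⟩ := hm
    omega
  rw [← Finset.sum_subset hsub (fun m hm hm' => ?_)]
  · rw [Finset.sum_image (fun a _ b _ h => by omega : ∀ a ∈ Finset.range (r / 2 + 1),
      ∀ b ∈ Finset.range (r / 2 + 1), 2 * a = 2 * b → a = b)]
    apply Finset.sum_congr rfl
    intro j _
    rw [hcoeff, mul_comm]
  · -- terms outside the image vanish: they are odd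
    have hmodd : Odd m := by
      rcases Nat.even_or_odd m with he | ho
      · exfalso
        apply hm'
        simp only [Finset.mem_image, Finset.mem_range]
        simp only [Finset.mem_range] at hm
        obtain ⟨c, hc⟩ := he
        exact ⟨c, by omega, by omega⟩
      · exact ho
    rw [hodd m hmodd, zero_mul]
end

section
/- Let p, r ∈ ℕ with r ≤ p. If real constants c_m (for 0 ≤ m ≤ ⌊(p−r)/2⌋) and d_m (for 0 ≤ m ≤ ⌊(p−r−1)/2⌋) satisfy Σ_m c_m (x₁²+x₂²)^m x₁^{p−r−2m} + Σ_m d_m (x₁²+x₂²)^m x₂ x₁^{p−r−2m−1} = 0 for all (x₁,x₂) ∈ ℝ², then all c_m and all d_m are zero. -/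
open Finset

lemma aux_poly_zero (a : ℝ) (n : ℕ) (c : ℕ → ℝ)
    (h : ∀ s : ℝ, a ≤ s → ∑ m ∈ Finset.range n, c m * s ^ m = 0) :
    ∀ m < n, c m = 0 := by
  set P : Polynomial ℝ := ∑ m ∈ Finset.range n, Polynomial.C (c m) * Polynomial.X ^ m with hP
  have hP0 : P = 0 := by
    apply Polynomial.eq_zero_of_infinite_isRoot
    apply (Set.Ici_infinite a).mono
    intro s hs
    simp only [Set.mem_setOf_eq, Polynomial.IsRoot, hP, Polynomial.eval_finset_sum,
      Polynomial.eval_mul, Polynomial.eval_C, Polynomial.eval_pow, Polynomial.eval_X]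
    exact h s hs
  intro m hm
  have := congrArg (fun Q => Polynomial.coeff Q m) hP0
  simpa [hP, Polynomial.finset_sum_coeff, Polynomial.coeff_C_mul, Polynomial.coeff_X_pow,
    Finset.sum_ite_eq', hm] using this

theorem stmt_6 (p r : ℕ) (hr : r ≤ p) (c d : ℕ → ℝ)
    (h : ∀ x₁ x₂ : ℝ,
      (∑ m ∈ Finset.range ((p - r) / 2 + 1),
          c m * (x₁ ^ 2 + x₂ ^ 2) ^ m * x₁ ^ (p - r - 2 * m)) +
      (∑ m ∈ Finset.range ((p - r + 1) / 2),
          d m * (x₁ ^ 2 + x₂ ^ 2) ^ m * x₂ * x₁ ^ (p - r - 2 * m - 1)) = 0) :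
    (∀ m ≤ (p - r) / 2, c m = 0) ∧ (∀ m, 2 * m + 1 ≤ p - r → d m = 0) := by
  set q := p - r with hq
  -- Specialize to x₁ = 1, x₂ = t
  have h1 : ∀ t : ℝ,
      (∑ m ∈ Finset.range (q / 2 + 1), c m * (1 + t ^ 2) ^ m) +
      t * (∑ m ∈ Finset.range ((q + 1) / 2), d m * (1 + t ^ 2) ^ m) = 0 := by
    intro t
    have := h 1 t
    simp only [one_pow, mul_one] at this
    rw [Finset.mul_sum, ← this]
    congr 1
    exact Finset.sum_congr rfl fun m _ => by ring
  -- even part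
  have hA : ∀ s : ℝ, 1 ≤ s → ∑ m ∈ Finset.range (q / 2 + 1), c m * s ^ m = 0 := by
    intro s hs
    set t := Real.sqrt (s - 1) with ht
    have ht2 : 1 + t ^ 2 = s := by
      rw [ht, Real.sq_sqrt (by linarith)]; ring
    have e1 := h1 t
    have e2 := h1 (-t)
    simp only [neg_sq, neg_mul] at e2
    simp only [ht2] at e1 e2
    linarith
  -- odd part
  have hB : ∀ s : ℝ, 2 ≤ s → ∑ m ∈ Finset.range ((q + 1) / 2), d m * s ^ m = 0 := by
    intro s hs
    set t := Real.sqrt (s - 1) with ht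
    have htpos : 0 < t := Real.sqrt_pos.mpr (by linarith)
    have ht2 : 1 + t ^ 2 = s := by
      rw [ht, Real.sq_sqrt (by linarith)]; ring
    have e1 := h1 t
    have e2 := h1 (-t)
    simp only [neg_sq, neg_mul] at e2
    simp only [ht2] at e1 e2
    have : t * (∑ m ∈ Finset.range ((q + 1) / 2), d m * s ^ m) = 0 := by linarith
    rcases mul_eq_zero.mp this with h' | h'
    · exact absurd h' (ne_of_gt htpos)
    · exact h'
  constructor
  · intro m hm
    exact aux_poly_zero 1 _ c hA m (by omega)
  · intro m hm
    exact aux_poly_zero 2 _ d hB m (by omega)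
end

section
/- Let n = 2 and p, r ∈ ℕ. Suppose that for every unit vector u ∈ S¹, with ū its +π/2 rotation, one has Σ_{m,s: 2m+s=p−r} a_{ms} Q^m u^s + Σ_{m,s: 2m+s+1=p−r} b_{ms} Q^m ū u^s = 0 in the space of symmetric (p−r)-tensors on ℝ², where Q is the metric tensor. Then all coefficients a_{ms} and b_{ms} vanish. -/
open scoped RealInnerProductSpace
open Finset

/-- The rotation of `u` by `+π/2` in ℝ². -/
noncomputable def ubar (u : EuclideanSpace ℝ (Fin 2)) : EuclideanSpace ℝ (Fin 2) :=
  WithLp.toLp 2 ![-(u 1), u 0]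

/-- In ℝ², if for every unit vector `u`
`Σ_{2m+s=p−r} a_{ms} Q^m u^s + Σ_{2m+s+1=p−r} b_{ms} Q^m ū u^s = 0` as symmetric
`(p−r)`-tensors (expressed as polynomials in `x`; `Q` evaluates to `‖x‖²`), then all the
coefficients `a_{ms}`, `b_{ms}` vanish. -/
theorem stmt_14 (p r : ℕ) (hr : r ≤ p) (a b : ℕ → ℕ → ℝ)
    (h : ∀ u : EuclideanSpace ℝ (Fin 2), ‖u‖ = 1 →
      ∀ x : EuclideanSpace ℝ (Fin 2),
        (∑ m ∈ Finset.range ((p - r) / 2 + 1),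
            a m (p - r - 2 * m) * ‖x‖ ^ (2 * m) * ⟪u, x⟫ ^ (p - r - 2 * m)) +
        (∑ m ∈ Finset.range ((p - r + 1) / 2),
            b m (p - r - 2 * m - 1) * ‖x‖ ^ (2 * m) * ⟪ubar u, x⟫ *
              ⟪u, x⟫ ^ (p - r - 2 * m - 1)) = 0) :
    (∀ m s, 2 * m + s = p - r → a m s = 0) ∧
    (∀ m s, 2 * m + s + 1 = p - r → b m s = 0) := by
  set d := p - r with hd
  set v : ℝ → ℝ → EuclideanSpace ℝ (Fin 2) := fun t e => (WithLp.equiv 2 _).symm ![t, e]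
    with hv
  have hnorm : ∀ t e : ℝ, t ^ 2 + e ^ 2 = 1 → ‖v t e‖ = 1 := by
    intro t e he
    simp only [hv, EuclideanSpace.norm_eq, Fin.sum_univ_two, WithLp.equiv_symm_apply, PiLp.toLp_apply,
      Matrix.cons_val_zero, Matrix.cons_val_one, Matrix.head_cons, Real.norm_eq_abs, sq_abs]
    rw [he, Real.sqrt_one]
  have hu : ‖v 1 0‖ = 1 := hnorm 1 0 (by norm_num)
  have hinner : ∀ t e : ℝ, ⟪v 1 0, v t e⟫ = t := by
    intro t e
    simp [hv, PiLp.inner_apply, RCLike.inner_apply, Fin.sum_univ_two]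
  have hinner2 : ∀ t e : ℝ, ⟪ubar (v 1 0), v t e⟫ = e := by
    intro t e
    simp [hv, ubar, PiLp.inner_apply, RCLike.inner_apply, Fin.sum_univ_two]
  have key : ∀ t : ℝ, t ∈ Set.Ioo (-1:ℝ) 1 →
      (∑ m ∈ Finset.range (d / 2 + 1), a m (d - 2*m) * t ^ (d - 2*m)) = 0 ∧
      (∑ m ∈ Finset.range ((d+1)/2), b m (d - 2*m - 1) * t ^ (d - 2*m - 1)) = 0 := by
    intro t ht
    have ht2 : t ^ 2 < 1 := by nlinarith [ht.1, ht.2]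
    set e := Real.sqrt (1 - t ^ 2) with hedef
    have he2 : e ^ 2 = 1 - t ^ 2 := Real.sq_sqrt (by linarith)
    have hepos : 0 < e := Real.sqrt_pos.2 (by linarith)
    have h1 := h (v 1 0) hu (v t e)
    have h2 := h (v 1 0) hu (v t (-e))
    rw [hnorm t e (by linarith), hinner, hinner2] at h1
    rw [hnorm t (-e) (by rw [neg_pow]; simp; linarith), hinner, hinner2] at h2
    simp only [one_pow, mul_one] at h1 h2
    set F := ∑ m ∈ Finset.range (d / 2 + 1), a m (d - 2*m) * t ^ (d - 2*m) with hF
    set G := ∑ m ∈ Finset.range ((d+1)/2), b m (d - 2*m - 1) * t ^ (d - 2*m - 1) with hG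
    have e1 : (∑ m ∈ Finset.range ((d+1)/2),
        b m (d - 2*m - 1) * e * t ^ (d - 2*m - 1)) = e * G := by
      rw [hG, Finset.mul_sum]; exact Finset.sum_congr rfl fun m _ => by ring
    have e2 : (∑ m ∈ Finset.range ((d+1)/2),
        b m (d - 2*m - 1) * (-e) * t ^ (d - 2*m - 1)) = -(e * G) := by
      rw [← e1, ← Finset.sum_neg_distrib]
      exact Finset.sum_congr rfl fun m _ => by ring
    rw [e1] at h1
    rw [e2] at h2
    have hFz : F = 0 := by linarith
    have hGz : G = 0 := by
      have : e * G = 0 := by linarith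
      rcases mul_eq_zero.1 this with h' | h'
      · exact absurd h' (ne_of_gt hepos)
      · exact h'
    exact ⟨hFz, hGz⟩
  -- polynomial step
  have hIoo : (Set.Ioo (-1:ℝ) 1).Infinite := Set.Ioo_infinite (by norm_num)
  have polyzero : ∀ (N : ℕ) (c : ℕ → ℝ) (f : ℕ → ℕ),
      (∀ m' ∈ Finset.range N, ∀ m'' ∈ Finset.range N, f m' = f m'' → m' = m'') →
      (∀ t : ℝ, t ∈ Set.Ioo (-1:ℝ) 1 → ∑ m ∈ Finset.range N, c m * t ^ (f m) = 0) →
      ∀ m, m ∈ Finset.range N → c m = 0 := by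
    intro N c f hinj hc m hm
    set P : Polynomial ℝ := ∑ m ∈ Finset.range N, Polynomial.C (c m) * Polynomial.X ^ (f m)
      with hP
    have hPz : P = 0 := by
      apply Polynomial.eq_zero_of_infinite_isRoot
      apply hIoo.mono
      intro t ht
      simp only [Set.mem_setOf_eq, Polynomial.IsRoot, hP, Polynomial.eval_finset_sum,
        Polynomial.eval_mul, Polynomial.eval_C, Polynomial.eval_pow, Polynomial.eval_X]
      exact hc t ht
    have hcoeff : P.coeff (f m) = c m := by
      rw [hP, Polynomial.finset_sum_coeff]
      rw [Finset.sum_eq_single m]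
      · simp [Polynomial.coeff_C_mul, Polynomial.coeff_X_pow]
      · intro m' hm' hne
        simp only [Polynomial.coeff_C_mul, Polynomial.coeff_X_pow]
        rw [if_neg, mul_zero]
        exact fun heq => hne (hinj m' hm' m hm heq.symm)
      · intro hmm; exact absurd hm hmm
    rw [hPz] at hcoeff
    simpa using hcoeff.symm
  constructor
  · intro m s hms
    have hmrange : m ∈ Finset.range (d / 2 + 1) := Finset.mem_range.2 (by omega)
    have hs : s = d - 2 * m := by omega
    rw [hs]
    refine polyzero _ (fun m => a m (d - 2*m)) (fun m => d - 2*m) ?_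
      (fun t ht => (key t ht).1) m hmrange
    intro m' hm' m'' hm'' heq
    rw [Finset.mem_range] at hm' hm''
    omega
  · intro m s hms
    have hmrange : m ∈ Finset.range ((d+1) / 2) := Finset.mem_range.2 (by omega)
    have hs : s = d - 2 * m - 1 := by omega
    rw [hs]
    refine polyzero _ (fun m => b m (d - 2*m - 1)) (fun m => d - 2*m - 1) ?_
      (fun t ht => (key t ht).2) m hmrange
    intro m' hm' m'' hm'' heq
    rw [Finset.mem_range] at hm' hm''
    omega
end
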